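/- Let p be an odd prime, q a power of p (viewed as a real number), and let n ≥ 1 and k ≥ 0 be integers. Let ℛ_n^{0k} denote the finite set of weakly decreasing integer tuples λ = (λ_1, …, λ_n) with k ≥ λ_1 ≥ … ≥ λ_n ≥ 0, and for λ, μ ∈ ℛ_n^{0k} set 𝓑_λ(μ) := ∑_{1 ≤ i, j ≤ n} min(λ_i, μ_j). Then every function φ : ℛ_n^{0k} → ℝ can be written in exactly one way as a linear combination φ = ∑_{λ ∈ ℛ_n^{0k}} c_λ G_λ with real coefficients c_λ, where G_λ(μ) = (-q)^{𝓑_λ(μ)}; that is, the functions (G_λ)_{λ ∈ ℛ_n^{0k}} form a basis of the space of real-valued functions on ℛ_n^{0k}. -/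

import Mathlib

/- Consequence of Lemma 3.2: every real-valued function on ℛ_n^{0k} has a unique expansion
as a linear combination of the functions G_λ(μ) = (-q)^{𝓑_λ(μ)}. -/

/-- Weakly decreasing integer tuples λ with k ≥ λ_1 ≥ … ≥ λ_n ≥ 0
(encoded with values in `Fin (k+1)`). -/
abbrev R0k (n k : ℕ) : Type :=
  {f : Fin n → Fin (k + 1) // ∀ i j : Fin n, i ≤ j → f j ≤ f i}

/-- 𝓑_λ(μ) = ∑_{1 ≤ i, j ≤ n} min(λ_i, μ_j). -/
def Bsum {n k : ℕ} (l m : R0k n k) : ℕ :=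
  ∑ i : Fin n, ∑ j : Fin n, min ((l.1 i : ℕ)) ((m.1 j : ℕ))

namespace Stmt3Aux
open MvPolynomial Finset


/-- exponent of the point coordinates -/
def wexp (k : ℕ) (d : Fin k → ℕ) (m : Fin k) : ℕ := ∑ u : Fin k, min (u.1+1) (m.1+1) * d u

lemma wexp_zero {k : ℕ} (d : Fin (k+1) → ℕ) : wexp (k+1) d 0 = ∑ u, d u := by
  unfold wexp
  apply Finset.sum_congr rfl
  intro u _
  have : min (u.1+1) ((0 : Fin (k+1)).1+1) = 1 := by simp [Nat.min_eq_right, Nat.succ_le_succ]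
  rw [this, one_mul]

lemma wexp_succ {k : ℕ} (d : Fin (k+1) → ℕ) (m : Fin k) :
    wexp (k+1) d m.succ = (∑ u, d u) + wexp k (Fin.tail d) m := by
  unfold wexp
  rw [Fin.sum_univ_succ, Fin.sum_univ_succ]
  have h0 : min ((0:Fin (k+1)).1+1) (m.succ.1+1) = 1 := by
    simp [Nat.min_eq_left, Nat.succ_le_succ]
  rw [h0, one_mul]
  have : ∀ u : Fin k, min (u.succ.1+1) (m.succ.1+1) * d u.succ
      = d u.succ + min (u.1+1) (m.1+1) * d u.succ := by
    intro u
    have : min (u.succ.1+1) (m.succ.1+1) = 1 + min (u.1+1) (m.1+1) := by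
      simp [Fin.val_succ, Nat.succ_min_succ]; omega
    rw [this, add_mul, one_mul]
  rw [Finset.sum_congr rfl (fun u _ => this u), Finset.sum_add_distrib]
  simp only [Fin.tail]
  ring

lemma point_cons {k : ℕ} (s t : ℝ) (d : Fin (k+1) → ℕ) :
    (fun m : Fin (k+1) => s * t ^ wexp (k+1) d m)
      = Fin.cons (s * t ^ (∑ u, d u))
          (fun m : Fin k => (s * t ^ (∑ u, d u)) * t ^ wexp k (Fin.tail d) m) := by
  funext m
  refine Fin.cases ?_ ?_ m
  · rw [Fin.cons_zero, wexp_zero]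
  · intro m'
    rw [Fin.cons_succ, wexp_succ, pow_add]
    ring

lemma tpow_injective {t : ℝ} (ht : 1 < |t|) : Function.Injective (fun i : ℕ => t ^ i) := by
  intro i j hij
  have h : |t| ^ i = |t| ^ j := by
    rw [← abs_pow, ← abs_pow]; simp only at hij; rw [hij]
  exact (pow_right_strictMono₀ ht).injective h

theorem unisolv (t : ℝ) (ht : 1 < |t|) :
    ∀ (k n : ℕ) (s : ℝ), s ≠ 0 → ∀ P : MvPolynomial (Fin k) ℝ,
      P.totalDegree ≤ n →
      (∀ d : Fin k → ℕ, (∑ u, d u) ≤ n → eval (fun m => s * t ^ wexp k d m) P = 0) →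
      P = 0 := by
  have ht0 : t ≠ 0 := by
    intro h; rw [h] at ht; simp at ht; linarith
  intro k
  induction k with
  | zero =>
    intro n s hs P _ hvan
    obtain ⟨r, rfl⟩ := MvPolynomial.C_surjective (Fin 0) P
    have h0 := hvan (fun _ => 0) (by simp)
    rw [eval_C] at h0
    rw [h0, map_zero]
  | succ k ih =>
    intro n s hs P hdeg hvan
    set Φ := finSuccEquiv ℝ k P with hΦ
    have key : ∀ j, j ≤ n+1 → ∃ Ψ : Polynomial (MvPolynomial (Fin k) ℝ),
        Φ = (∏ i ∈ Finset.range j,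
              (Polynomial.X - Polynomial.C (C (s * t ^ (n - i))))) * Ψ
          ∧ ∀ i, Ψ.coeff i = 0 ∨ (Ψ.coeff i).totalDegree + i + j ≤ n := by
      intro j
      induction j with
      | zero =>
        intro _
        refine ⟨Φ, by simp, fun i => ?_⟩
        by_cases h : Φ.coeff i = 0
        · exact Or.inl h
        · right
          have h2 := totalDegree_coeff_finSuccEquiv_add_le P i (by rw [← hΦ]; exact h)
          rw [← hΦ] at h2
          omega
      | succ j ihj =>
        intro hj1
        obtain ⟨Ψ, hfac, hb⟩ := ihj (by omega)
        set y := s * t ^ (n - j) with hy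
        have hy0 : y ≠ 0 := mul_ne_zero hs (pow_ne_zero _ ht0)
        have heval : ∀ x' : Fin k → ℝ,
            eval x' (Polynomial.eval (C y) Ψ) = Polynomial.eval y (Ψ.map (eval x')) := by
          intro x'
          rw [Polynomial.eval_map]
          have := Polynomial.hom_eval₂ Ψ (RingHom.id _) (eval x') (C y)
          simpa using this
        -- ψ = 0
        have hψ : Polynomial.eval (C y) Ψ = 0 := by
          apply ih (n - j) y hy0
          · -- degree bound
            rw [Polynomial.eval_eq_sum_range]
            refine le_trans (MvPolynomial.totalDegree_finset_sum _ _) ?_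
            apply Finset.sup_le
            intro i _
            rcases hb i with h | h
            · simp [h]
            · refine le_trans (totalDegree_mul _ _) ?_
              have : ((C y : MvPolynomial (Fin k) ℝ) ^ i).totalDegree = 0 := by
                rw [← map_pow, totalDegree_C]
              omega
          · -- vanishing
            intro d' hd'
            set dd : Fin (k+1) → ℕ := Fin.cons ((n-j) - ∑ u, d' u) d' with hdd
            have hsum : (∑ u, dd u) = n - j := by
              rw [hdd, Fin.sum_cons]; omega
            have hv := hvan dd (by omega)
            rw [point_cons, hsum] at hv
            rw [Fin.tail_cons] at hv
            rw [eval_eq_eval_mv_eval'] at hv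
            rw [← hΦ, hfac, Polynomial.map_mul, Polynomial.eval_mul] at hv
            rw [Polynomial.map_prod, Polynomial.eval_prod] at hv
            have hprod : (∏ i ∈ Finset.range j, Polynomial.eval (s * t ^ (n - j))
                (Polynomial.map (eval fun m => s * t ^ (n - j) * t ^ wexp k d' m)
                  (Polynomial.X - Polynomial.C (C (s * t ^ (n - i)))))) ≠ 0 := by
              apply Finset.prod_ne_zero_iff.mpr
              intro i hi
              rw [Polynomial.map_sub, Polynomial.map_X, Polynomial.map_C,
                Polynomial.eval_sub, Polynomial.eval_X, Polynomial.eval_C, eval_C]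
              intro hzero
              have : t ^ (n - j) = t ^ (n - i) := by
                have := sub_eq_zero.mp hzero
                exact mul_left_cancel₀ hs this
              have hij := tpow_injective ht this
              simp only [Finset.mem_range] at hi
              omega
            have := (mul_eq_zero.mp hv).resolve_left hprod
            rw [heval]
            exact this
        -- factor out the root
        have hdvd : (Polynomial.X - Polynomial.C (C y)) ∣ Ψ :=
          (Polynomial.dvd_iff_isRoot).mpr hψ
        obtain ⟨Ψ', hΨ'⟩ := hdvd
        have hrec : ∀ i, Ψ'.coeff i = Ψ.coeff (i+1) + (C y) * Ψ'.coeff (i+1) := by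
          intro i
          have : Ψ.coeff (i+1) = Ψ'.coeff i - (C y) * Ψ'.coeff (i+1) := by
            rw [hΨ', sub_mul, Polynomial.coeff_sub, Polynomial.coeff_X_mul,
              Polynomial.coeff_C_mul]
          rw [this]; ring
        have claim2 : ∀ M i, Ψ'.natDegree ≤ i + M →
            (Ψ'.coeff i = 0 ∨ (Ψ'.coeff i).totalDegree + i + (j+1) ≤ n) := by
          intro M
          induction M with
          | zero =>
            intro i hi
            have hz : Ψ'.coeff (i+1) = 0 :=
              Polynomial.coeff_eq_zero_of_natDegree_lt (by omega)
            have h := hrec i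
            rw [hz, mul_zero, add_zero] at h
            rcases hb (i+1) with h1 | h1
            · left; rw [h, h1]
            · right; rw [h]; omega
          | succ M ihM =>
            intro i hi
            have h2 := ihM (i+1) (by omega)
            have h1 := hb (i+1)
            by_cases hcase : i + j + 1 ≤ n
            · right
              have hta : (Ψ.coeff (i+1)).totalDegree ≤ n - (i+j+1) := by
                rcases h1 with h1 | h1
                · rw [h1, totalDegree_zero]; omega
                · omega
              have htb : ((Polynomial.C (C y) * Ψ').coeff (i+1)).totalDegree
                  ≤ n - (i+j+1) := by
                rw [Polynomial.coeff_C_mul]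
                rcases h2 with h2 | h2
                · rw [h2, mul_zero, totalDegree_zero]; omega
                · have hm := totalDegree_mul (C y : MvPolynomial (Fin k) ℝ) (Ψ'.coeff (i+1))
                  rw [totalDegree_C] at hm
                  omega
              rw [Polynomial.coeff_C_mul] at htb
              have hadd := MvPolynomial.totalDegree_add (Ψ.coeff (i+1))
                ((C y : MvPolynomial (Fin k) ℝ) * Ψ'.coeff (i+1))
              have hle : (Ψ.coeff (i+1) + (C y : MvPolynomial (Fin k) ℝ)
                  * Ψ'.coeff (i+1)).totalDegree ≤ n - (i+j+1) :=
                le_trans hadd (max_le hta htb)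
              rw [hrec i]
              omega
            · left
              have hz1 : Ψ.coeff (i+1) = 0 := by
                rcases h1 with h1 | h1
                · exact h1
                · exact absurd h1 (by omega)
              have hz2 : Ψ'.coeff (i+1) = 0 := by
                rcases h2 with h2 | h2
                · exact h2
                · exact absurd h2 (by omega)
              rw [hrec i, hz1, hz2, mul_zero, add_zero]
        refine ⟨Ψ', ?_, fun i => claim2 (Ψ'.natDegree + 1) i (by omega)⟩
        rw [Finset.prod_range_succ, hfac, hΨ', ← hy]
        ring
    obtain ⟨Ψ, hfac, hb⟩ := key (n+1) le_rfl
    have hΨ0 : Ψ = 0 := by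
      apply Polynomial.ext
      intro i
      rcases hb i with h | h
      · simp [h]
      · omega
    have hΦ0 : Φ = 0 := by rw [hfac, hΨ0, mul_zero]
    have h0 : finSuccEquiv ℝ k P = finSuccEquiv ℝ k 0 := by
      rw [map_zero, ← hΦ]; exact hΦ0
    exact (finSuccEquiv ℝ k).injective h0


variable {n k : ℕ}

variable {n k : ℕ}

def fmin (l : R0k n k) (v : ℕ) : ℕ := ∑ i : Fin n, min ((l.1 i : ℕ)) v

lemma Bsum_eq (l m : R0k n k) : Bsum l m = ∑ j : Fin n, fmin l ((m.1 j : ℕ)) := by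
  rw [Bsum, Finset.sum_comm]; rfl

def cnt (l : R0k n k) (u : Fin k) : ℕ :=
  (Finset.univ.filter (fun i => l.1 i = u.succ)).card

lemma card_fiber_sum (l : R0k n k) :
    n = ∑ v : Fin (k+1), (Finset.univ.filter (fun i => l.1 i = v)).card := by
  have h := Finset.card_eq_sum_card_fiberwise
    (s := (Finset.univ : Finset (Fin n))) (t := Finset.univ) (f := l.1)
    (fun x _ => Finset.mem_univ _)
  simpa using h

lemma cnt_sum_le (l : R0k n k) : (∑ u : Fin k, cnt l u) ≤ n := by
  have h := card_fiber_sum l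
  rw [Fin.sum_univ_succ] at h
  unfold cnt
  omega

lemma cnt_le (l : R0k n k) (u : Fin k) : cnt l u ≤ n :=
  le_trans (Finset.single_le_sum (f := fun u => cnt l u) (fun _ _ => Nat.zero_le _)
    (Finset.mem_univ u)) (cnt_sum_le l)

lemma fmin_eq (l : R0k n k) (v : ℕ) :
    fmin l v = ∑ u : Fin k, min (u.1+1) v * cnt l u := by
  unfold fmin
  rw [← Finset.sum_fiberwise_of_maps_to (g := l.1) (t := Finset.univ)
    (fun x _ => Finset.mem_univ _) (fun i => min ((l.1 i : ℕ)) v)]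
  have hfib : ∀ w : Fin (k+1),
      (∑ i ∈ Finset.univ.filter (fun i => l.1 i = w), min ((l.1 i : ℕ)) v)
        = (Finset.univ.filter (fun i => l.1 i = w)).card * min ((w : ℕ)) v := by
    intro w
    rw [Finset.sum_congr rfl (fun i hi => by
      rw [(Finset.mem_filter.mp hi).2]), Finset.sum_const, smul_eq_mul]
  rw [Finset.sum_congr rfl (fun w _ => hfib w), Fin.sum_univ_succ]
  simp only [Fin.val_zero, Nat.zero_min, Nat.mul_zero, zero_add]
  apply Finset.sum_congr rfl
  intro u _
  rw [Nat.mul_comm]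
  congr 1

lemma antitone_iff_lt_card (l : R0k n k) (v : Fin (k+1)) (i : Fin n) :
    v ≤ l.1 i ↔ i.1 < (Finset.univ.filter (fun i' => v ≤ l.1 i')).card := by
  constructor
  · intro hv
    have hsub : Finset.Iic i ⊆ Finset.univ.filter (fun i' => v ≤ l.1 i') := by
      intro j hj
      simp only [Finset.mem_Iic] at hj
      simp only [Finset.mem_filter, Finset.mem_univ, true_and]
      exact le_trans hv (l.2 j i hj)
    have hc := Finset.card_le_card hsub
    rw [Fin.card_Iic] at hc
    omega
  · intro hcard
    by_contra hv
    have hsub : Finset.univ.filter (fun i' => v ≤ l.1 i') ⊆ Finset.Iio i := by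
      intro j hj
      simp only [Finset.mem_filter, Finset.mem_univ, true_and] at hj
      simp only [Finset.mem_Iio]
      by_contra hji
      push_neg at hji
      exact hv (le_trans hj (l.2 i j hji))
    have hc := Finset.card_le_card hsub
    rw [Fin.card_Iio] at hc
    omega

lemma card_filter_le_eq (l : R0k n k) (u : Fin k) :
    (Finset.univ.filter (fun i => u.succ ≤ l.1 i)).card
      = ∑ u' : Fin k, if u ≤ u' then cnt l u' else 0 := by
  have h := Finset.card_eq_sum_card_fiberwise
    (s := Finset.univ.filter (fun i => u.succ ≤ l.1 i)) (t := Finset.univ) (f := l.1)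
    (fun x _ => Finset.mem_univ _)
  have hfib : ∀ w : Fin (k+1),
      ((Finset.univ.filter (fun i => u.succ ≤ l.1 i)).filter (fun i => l.1 i = w))
        = if u.succ ≤ w then Finset.univ.filter (fun i => l.1 i = w) else ∅ := by
    intro w
    split_ifs with hw
    · ext i
      simp only [Finset.mem_filter, Finset.mem_univ, true_and]
      constructor
      · rintro ⟨_, h2⟩; exact h2
      · intro h2; exact ⟨h2 ▸ hw, h2⟩
    · ext i
      simp only [Finset.mem_filter, Finset.mem_univ, true_and, Finset.notMem_empty,
        iff_false, not_and]
      intro h1 h2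
      exact hw (h2 ▸ h1)
  rw [h, Finset.sum_congr rfl (fun w _ => by rw [hfib w])]
  have : ∀ w : Fin (k+1),
      (if u.succ ≤ w then Finset.univ.filter (fun i => l.1 i = w) else ∅).card
        = if u.succ ≤ w then (Finset.univ.filter (fun i => l.1 i = w)).card else 0 := by
    intro w; split_ifs <;> simp
  rw [Finset.sum_congr rfl (fun w _ => this w), Fin.sum_univ_succ]
  have h0 : ¬ (u.succ ≤ (0 : Fin (k+1))) := by
    simp [Fin.le_def]
  rw [if_neg h0, zero_add]
  apply Finset.sum_congr rfl
  intro u' _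
  exact if_congr Fin.succ_le_succ_iff rfl rfl

lemma sum_ite_lt (a : ℕ) (ha : a ≤ k) :
    (∑ u : Fin k, if u.1 < a then 1 else 0) = a := by
  rw [Fin.sum_univ_eq_sum_range (fun m => if m < a then 1 else 0) k]
  have h1 : ∀ m ∈ Finset.range k, (if m < a then (1:ℕ) else 0)
      = if m ∈ Finset.range a then 1 else 0 := by
    intro m _; simp [Finset.mem_range]
  rw [Finset.sum_congr rfl h1, Finset.sum_ite_mem]
  have h2 : Finset.range k ∩ Finset.range a = Finset.range a := by
    ext x; simp only [Finset.mem_inter, Finset.mem_range]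
    constructor
    · tauto
    · intro hx; exact ⟨lt_of_lt_of_le hx ha, hx⟩
  rw [h2]
  simp

lemma val_eq_sum (l : R0k n k) (i : Fin n) :
    (l.1 i : ℕ) = ∑ u : Fin k, if u.succ ≤ l.1 i then 1 else 0 := by
  have : ∀ u : Fin k, (if u.succ ≤ l.1 i then (1:ℕ) else 0)
      = if u.1 < (l.1 i : ℕ) then 1 else 0 := by
    intro u
    have h : u.succ ≤ l.1 i ↔ u.1 < (l.1 i : ℕ) := by
      rw [Fin.le_def, Fin.val_succ]
      omega
    exact if_congr h rfl rfl
  rw [Finset.sum_congr rfl (fun u _ => this u), sum_ite_lt _ (by omega)]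

lemma cnt_injective : Function.Injective (cnt : R0k n k → (Fin k → ℕ)) := by
  intro l l' hc
  have hN : ∀ u : Fin k, (Finset.univ.filter (fun i => u.succ ≤ l.1 i)).card
      = (Finset.univ.filter (fun i => u.succ ≤ l'.1 i)).card := by
    intro u; rw [card_filter_le_eq, card_filter_le_eq, hc]
  apply Subtype.ext; funext i; apply Fin.ext
  rw [val_eq_sum, val_eq_sum]
  apply Finset.sum_congr rfl
  intro u _
  have hiff : (u.succ ≤ l.1 i) ↔ (u.succ ≤ l'.1 i) := by
    rw [antitone_iff_lt_card, antitone_iff_lt_card, hN u]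
  exact if_congr hiff rfl rfl

lemma relation_all (t : ℝ) (c : R0k n k → ℝ)
    (H : ∀ μ : R0k n k, ∑ l : R0k n k, c l * t ^ Bsum l μ = 0)
    (h : Fin n → Fin (k+1)) :
    ∑ l : R0k n k, c l * t ^ (∑ j : Fin n, fmin l ((h j : ℕ))) = 0 := by
  classical
  set σ := Tuple.sort h with hσ
  have hmono : Monotone (h ∘ σ) := Tuple.monotone_sort h
  set g : Fin n → Fin (k+1) := fun i => (h ∘ σ) (Fin.rev i) with hg
  have hanti : ∀ i j : Fin n, i ≤ j → g j ≤ g i := by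
    intro i j hij
    exact hmono (Fin.rev_le_rev.mpr hij)
  have hB : ∀ l : R0k n k, (∑ j : Fin n, fmin l ((g j : ℕ)))
      = ∑ j : Fin n, fmin l ((h j : ℕ)) := by
    intro l
    exact Fintype.sum_equiv (Fin.revPerm.trans σ)
      (fun j => fmin l ((g j : ℕ))) (fun j => fmin l ((h j : ℕ))) (fun j => rfl)
  have hfinal : (∑ l : R0k n k, c l * t ^ (∑ j : Fin n, fmin l ((h j : ℕ))))
      = ∑ l : R0k n k, c l * t ^ Bsum l ⟨g, hanti⟩ :=
    Finset.sum_congr rfl (fun l _ => by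
      rw [Bsum_eq l ⟨g, hanti⟩]
      exact (congrArg (fun z => c l * t ^ z) (hB l)).symm)
  rw [hfinal]
  exact H _

lemma exists_tuple (a : Fin (k+1) → ℕ) (ha : ∑ v, a v = n) :
    ∃ h : Fin n → Fin (k+1), ∀ F : Fin (k+1) → ℕ,
      (∑ j : Fin n, F (h j)) = ∑ v, a v * F v := by
  classical
  set L : List (Fin (k+1)) := (List.finRange (k+1)).flatMap
    (fun v => List.replicate (a v) v) with hL
  have hlen : L.length = n := by
    rw [hL, List.length_flatMap]
    rw [← ha, Fin.sum_univ_def]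
    congr 1
    apply List.map_congr_left
    intro v _
    simp
  refine ⟨fun j => L.get (Fin.cast hlen.symm j), ?_⟩
  intro F
  have h1 : (∑ j : Fin n, F (L.get (Fin.cast hlen.symm j)))
      = ∑ i : Fin L.length, F (L.get i) :=
    Fintype.sum_equiv (Fin.castOrderIso hlen.symm).toEquiv _ _ (fun j => rfl)
  rw [h1]
  have h2 : ∑ i : Fin L.length, F (L.get i) = (L.map F).sum := by
    rw [← Fin.sum_univ_fun_getElem L F]
    rfl
  rw [h2, hL, List.map_flatMap]
  have h3 : ∀ v : Fin (k+1),
      ((List.replicate (a v) v).map F).sum = a v * F v := by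
    intro v
    rw [List.map_replicate, List.sum_replicate, smul_eq_mul]
  calc ((List.finRange (k+1)).flatMap fun v => (List.replicate (a v) v).map F).sum
      = ((List.finRange (k+1)).map (fun v => ((List.replicate (a v) v).map F).sum)).sum := by
        rw [List.flatMap, List.sum_flatten, List.map_map]
        rfl
    _ = ∑ v : Fin (k+1), a v * F v := by
        rw [← Fin.sum_univ_def]
        exact Finset.sum_congr rfl (fun v _ => h3 v)



lemma wexp_cnt (l : R0k n k) (m : Fin k) :
    wexp k (cnt l) m = fmin l (m.1+1) := by
  rw [fmin_eq]
  rfl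

lemma rel_Z (t : ℝ) (c : R0k n k → ℝ)
    (H : ∀ μ : R0k n k, ∑ l : R0k n k, c l * t ^ Bsum l μ = 0)
    (d : Fin k → ℕ) (hd : (∑ u, d u) ≤ n) :
    ∑ l : R0k n k, c l * t ^ (∑ m : Fin k, wexp k (cnt l) m * d m) = 0 := by
  classical
  set a : Fin (k+1) → ℕ := Fin.cons (n - ∑ u, d u) d with ha'
  have ha : ∑ v, a v = n := by rw [ha', Fin.sum_cons]; omega
  obtain ⟨h, hh⟩ := exists_tuple a ha
  have hexp : ∀ l : R0k n k, (∑ j : Fin n, fmin l ((h j : ℕ)))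
      = ∑ m : Fin k, wexp k (cnt l) m * d m := by
    intro l
    rw [hh (fun v => fmin l (v : ℕ)), Fin.sum_univ_succ]
    have h0 : fmin l (((0 : Fin (k+1)) : ℕ)) = 0 := by
      unfold fmin; simp
    rw [ha']
    simp only [Fin.cons_zero, Fin.cons_succ, h0, Nat.mul_zero, zero_add]
    apply Finset.sum_congr rfl
    intro u _
    rw [wexp_cnt, Nat.mul_comm]
    congr 1
  have hfinal : (∑ l : R0k n k, c l * t ^ (∑ m : Fin k, wexp k (cnt l) m * d m))
      = ∑ l : R0k n k, c l * t ^ (∑ j : Fin n, fmin l ((h j : ℕ))) :=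
    Finset.sum_congr rfl (fun l _ => by rw [hexp l])
  rw [hfinal]
  exact relation_all t c H h

/-- the index type for the interpolation matrix -/
def Dt (n k : ℕ) : Type := {d : Fin k → Fin (n+1) // (∑ u, (d u : ℕ)) ≤ n}

instance : Fintype (Dt n k) := Subtype.fintype _
instance : DecidableEq (Dt n k) := Subtype.instDecidableEq

def cntD (l : R0k n k) : Dt n k :=
  ⟨fun u => ⟨cnt l u, Nat.lt_succ_of_le (cnt_le l u)⟩, by
    simpa using cnt_sum_le l⟩

lemma cntD_injective : Function.Injective (cntD : R0k n k → Dt n k) := by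
  intro l l' he
  apply cnt_injective
  funext u
  have h2 := congrFun (congrArg Subtype.val he) u
  exact congrArg Fin.val h2

noncomputable def Zm (t : ℝ) (d e : Dt n k) : ℝ :=
  t ^ (∑ m : Fin k, wexp k (fun u => ((e.1 u : ℕ))) m * (d.1 m : ℕ))

noncomputable def Lmap (n k : ℕ) (t : ℝ) : (Dt n k → ℝ) →ₗ[ℝ] (Dt n k → ℝ) where
  toFun w := fun e => ∑ d, w d * Zm t d e
  map_add' w w' := by
    funext e
    simp [add_mul, Finset.sum_add_distrib]
  map_smul' r w := by
    funext e
    simp [Finset.mul_sum, smul_eq_mul, mul_assoc]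

lemma Lmap_injective (t : ℝ) (ht : 1 < |t|) :
    Function.Injective (Lmap n k t) := by
  rw [injective_iff_map_eq_zero]
  intro w hw
  classical
  set fs : Dt n k → (Fin k →₀ ℕ) :=
    fun d => Finsupp.equivFunOnFinite.symm (fun u => ((d.1 u : ℕ))) with hfs
  have hfs_inj : Function.Injective fs := by
    intro d d' hdd
    have h1 : (fun u => ((d.1 u : ℕ))) = (fun u => ((d'.1 u : ℕ))) :=
      Finsupp.equivFunOnFinite.symm.injective hdd
    apply Subtype.ext; funext u; apply Fin.ext
    exact congrFun h1 u
  set P : MvPolynomial (Fin k) ℝ := ∑ d : Dt n k, monomial (fs d) (w d) with hP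
  have hPdeg : P.totalDegree ≤ n := by
    refine le_trans (totalDegree_finset_sum _ _) (Finset.sup_le (fun d _ => ?_))
    refine le_trans (totalDegree_monomial_le _ _) ?_
    rw [Finsupp.sum_fintype _ _ (fun _ => rfl)]
    simp only [id_eq, hfs, Finsupp.equivFunOnFinite_symm_apply_apply]
    exact d.2
  have hPvan : ∀ dd : Fin k → ℕ, (∑ u, dd u) ≤ n →
      eval (fun m => (1:ℝ) * t ^ wexp k dd m) P = 0 := by
    intro dd hdd
    have hddu : ∀ u, dd u ≤ n := fun u =>
      le_trans (Finset.single_le_sum (f := dd) (fun _ _ => Nat.zero_le _)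
        (Finset.mem_univ u)) hdd
    set e : Dt n k := ⟨fun u => ⟨dd u, Nat.lt_succ_of_le (hddu u)⟩, by simpa using hdd⟩
      with he
    have hterm : ∀ d : Dt n k,
        eval (fun m => (1:ℝ) * t ^ wexp k dd m) (monomial (fs d) (w d))
          = w d * Zm t d e := by
      intro d
      rw [eval_monomial]
      congr 1
      rw [Finsupp.prod_fintype _ _ (fun _ => pow_zero _)]
      unfold Zm
      have hfsd : ∀ m, fs d m = ((d.1 m : ℕ)) := by
        intro m; rw [hfs]; simp
      have hprod : ∀ m : Fin k, ((1:ℝ) * t ^ wexp k dd m) ^ (fs d m)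
          = t ^ (wexp k (fun u => ((e.1 u : ℕ))) m * (d.1 m : ℕ)) := by
        intro m
        rw [one_mul, hfsd m, ← pow_mul]
      rw [Finset.prod_congr rfl (fun m _ => hprod m), Finset.prod_pow_eq_pow_sum]
    rw [hP, map_sum, Finset.sum_congr rfl (fun d _ => hterm d)]
    exact congrFun hw e
  have hP0 := unisolv t ht k n 1 one_ne_zero P hPdeg hPvan
  funext d₀
  have hco := congrArg (MvPolynomial.coeff (fs d₀)) hP0
  rw [hP, MvPolynomial.coeff_sum] at hco
  have hite : ∀ d : Dt n k, MvPolynomial.coeff (fs d₀) (monomial (fs d) (w d))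
      = if d = d₀ then w d else 0 := by
    intro d
    rw [MvPolynomial.coeff_monomial]
    by_cases hdd : d = d₀
    · rw [if_pos (by rw [hdd]), if_pos hdd]
    · rw [if_neg (fun hcontra => hdd (hfs_inj hcontra)), if_neg hdd]
  rw [Finset.sum_congr rfl (fun d _ => hite d), Finset.sum_ite_eq'] at hco
  simp only [Finset.mem_univ, if_true, MvPolynomial.coeff_zero] at hco
  simp only [Pi.zero_apply]
  exact hco

lemma key_inj (t : ℝ) (ht : 1 < |t|) (c : R0k n k → ℝ)
    (H : ∀ μ : R0k n k, ∑ l : R0k n k, c l * t ^ Bsum l μ = 0) : c = 0 := by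
  classical
  funext l₀
  have hsurj : Function.Surjective (Lmap n k t) :=
    (LinearMap.injective_iff_surjective).mp (Lmap_injective t ht)
  obtain ⟨w, hw⟩ := hsurj (Pi.single (cntD l₀) 1)
  have hzero : ∀ d : Dt n k, (∑ l : R0k n k, c l * Zm t d (cntD l)) = 0 := by
    intro d
    have hr := rel_Z t c H (fun m => ((d.1 m : ℕ))) (by exact d.2)
    exact hr
  have hfin : (∑ d : Dt n k, w d * (∑ l : R0k n k, c l * Zm t d (cntD l))) = 0 := by
    rw [Finset.sum_congr rfl (fun d _ => by rw [hzero d, mul_zero])]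
    simp
  have hswap : (∑ d : Dt n k, w d * (∑ l : R0k n k, c l * Zm t d (cntD l)))
      = ∑ l : R0k n k, c l * (∑ d : Dt n k, w d * Zm t d (cntD l)) := by
    simp_rw [Finset.mul_sum]
    rw [Finset.sum_comm]
    apply Finset.sum_congr rfl
    intro l _
    apply Finset.sum_congr rfl
    intro d _
    ring
  rw [hswap] at hfin
  have hLval : ∀ l : R0k n k, (∑ d : Dt n k, w d * Zm t d (cntD l))
      = (Pi.single (cntD l₀) (1:ℝ) : Dt n k → ℝ) (cntD l) := by
    intro l
    exact congrFun hw (cntD l)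
  rw [Finset.sum_congr rfl (fun l _ => by rw [hLval l])] at hfin
  have hsingle : ∀ l : R0k n k, c l * (Pi.single (cntD l₀) (1:ℝ) : Dt n k → ℝ) (cntD l)
      = if l = l₀ then c l else 0 := by
    intro l
    rw [Pi.single_apply]
    by_cases hl : l = l₀
    · rw [if_pos (by rw [hl]), if_pos hl, mul_one]
    · rw [if_neg (fun hcontra => hl (cntD_injective hcontra)), if_neg hl, mul_zero]
  rw [Finset.sum_congr rfl (fun l _ => hsingle l), Finset.sum_ite_eq'] at hfin
  simp only [Finset.mem_univ, if_true] at hfin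
  simpa using hfin

end Stmt3Aux

theorem stmt3 (p : ℕ) (hp : Nat.Prime p) (hodd : Odd p) (r : ℕ) (hr : 1 ≤ r)
    (q : ℝ) (hq : q = (p : ℝ) ^ r) (n k : ℕ) (hn : 1 ≤ n) :
    ∀ φ : R0k n k → ℝ, ∃! c : R0k n k → ℝ,
      φ = fun m : R0k n k => ∑ l : R0k n k, c l * (-q) ^ Bsum l m := by
  classical
  intro φ
  have hq1 : (1:ℝ) < q := by
    rw [hq]
    have hp2 : (2:ℝ) ≤ (p:ℝ) := by exact_mod_cast hp.two_le
    calc (1:ℝ) < 2 := one_lt_two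
      _ ≤ (p:ℝ) := hp2
      _ ≤ (p:ℝ) ^ r := le_self_pow₀ (by linarith) (by omega)
  have ht : 1 < |(-q : ℝ)| := by
    rw [abs_neg, abs_of_pos (lt_trans one_pos hq1)]
    exact hq1
  let T : (R0k n k → ℝ) →ₗ[ℝ] (R0k n k → ℝ) :=
    { toFun := fun c => fun m => ∑ l : R0k n k, c l * (-q) ^ Bsum l m
      map_add' := fun c c' => by
        funext m
        simp [add_mul, Finset.sum_add_distrib]
      map_smul' := fun a c => by
        funext m
        simp [Finset.mul_sum, smul_eq_mul, mul_assoc] }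
  have hTinj : Function.Injective T := by
    rw [injective_iff_map_eq_zero]
    intro c hc
    exact Stmt3Aux.key_inj (-q) ht c (fun μ => congrFun hc μ)
  have hTsurj : Function.Surjective T :=
    (LinearMap.injective_iff_surjective).mp hTinj
  obtain ⟨c, hc⟩ := hTsurj φ
  refine ⟨c, hc.symm, ?_⟩
  intro c' hc'
  apply hTinj
  rw [hc]
  exact hc'.symm
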